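/- Selection rule of the (q → 0)-Wigner–Eckart theorem (component identification): for natural numbers a, b and every pair (k, l) with k ≤ a and l ≤ b, setting l₀ = min(l, a − k), one has f̃^{k + l − l₀}(0, l₀) = some (k, l); that is, (k, l) lies in the connected component whose highest weight satisfies 2J = a + b − 2·min(l, a − k). (In spin language: the image state τ^j_m |j₁ m₁⟩, modeled by the crystal vector |j, m⟩ ⊗ |j₁, m₁⟩ with a = 2j, b = 2j₁, k = j − m, l = j₁ − m₁, lies in the irreducible representation J = j + j₁ − min(j₁ − m₁, j + m).) -/
import Mathlib


/-- Kashiwara's lowering operator `f̃` on the crystal tensor product `B_a ⊗ B_b`,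
modeled on pairs `(k, l)` of lowering-step counters (`k ≤ a`, `l ≤ b`):
`f̃(k,l) = (k+1, l)` if `a - k > l`; `f̃(k,l) = (k, l+1)` if `a - k ≤ l` and `l < b`;
`f̃(k,l) = none` otherwise. -/
def ftil (a b : ℕ) (p : ℕ × ℕ) : Option (ℕ × ℕ) :=
  if p.2 < a - p.1 then some (p.1 + 1, p.2)
  else if p.2 < b then some (p.1, p.2 + 1)
  else none

/-- Kashiwara's raising operator `ẽ` on the crystal tensor product `B_a ⊗ B_b`:
`ẽ(k,l) = (k-1, l)` if `a - k ≥ l` and `k > 0`; `ẽ(k,l) = (k, l-1)` if `a - k < l`;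
`ẽ(k,l) = none` otherwise. -/
def etil (a b : ℕ) (p : ℕ × ℕ) : Option (ℕ × ℕ) :=
  if p.2 ≤ a - p.1 ∧ 0 < p.1 then some (p.1 - 1, p.2)
  else if a - p.1 < p.2 then some (p.1, p.2 - 1)
  else none

/-- `n`-fold application of a partially defined crystal operator, propagating `none`. -/
def iterOpt (f : ℕ × ℕ → Option (ℕ × ℕ)) (n : ℕ) (p : ℕ × ℕ) : Option (ℕ × ℕ) :=
  (fun o => o.bind f)^[n] (some p)

lemma iterOpt_succ' (f : ℕ × ℕ → Option (ℕ × ℕ)) (n : ℕ) (p : ℕ × ℕ) :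
    iterOpt f (n + 1) p = (iterOpt f n p).bind f := by
  simp [iterOpt, Function.iterate_succ_apply']

lemma iterOpt_add (f : ℕ × ℕ → Option (ℕ × ℕ)) (m n : ℕ) (p q : ℕ × ℕ)
    (h : iterOpt f m p = some q) : iterOpt f (m + n) p = iterOpt f n q := by
  simp only [iterOpt, Nat.add_comm m n, Function.iterate_add_apply]
  rw [show (fun o => Option.bind o f)^[m] (some p) = iterOpt f m p from rfl, h]

lemma step1 (a b l₀ : ℕ) : ∀ k, k ≤ a → l₀ ≤ a - k →
    iterOpt (ftil a b) k (0, l₀) = some (k, l₀) := by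
  intro k
  induction k with
  | zero => intro _ _; rfl
  | succ k ih =>
    intro hk hl
    rw [iterOpt_succ', ih (Nat.le_of_succ_le hk)
      (le_trans hl (Nat.sub_le_sub_left (Nat.le_succ k) a))]
    have hlt : l₀ < a - k := lt_of_le_of_lt hl (by omega)
    simp [ftil, hlt]

lemma step2 (a b k : ℕ) : ∀ n l', a - k ≤ l' → l' + n ≤ b →
    iterOpt (ftil a b) n (k, l') = some (k, l' + n) := by
  intro n
  induction n with
  | zero => intro l' _ _; rfl
  | succ n ih =>
    intro l' h1 h2
    have : iterOpt (ftil a b) (1 + n) (k, l') = some (k, l' + (n + 1)) := by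
      rw [iterOpt_add (ftil a b) 1 n (k, l') (k, l' + 1)]
      · rw [ih (l' + 1) (by omega) (by omega)]; congr 2; omega
      · simp only [iterOpt, Function.iterate_one]
        simp [ftil, show ¬ l' < a - k by omega, show l' < b by omega]
    rwa [Nat.add_comm 1 n] at this

/-- Selection rule of the (q → 0)-Wigner–Eckart theorem (component identification):
for `k ≤ a`, `l ≤ b`, setting `l₀ = min l (a - k)`, one has
`f̃^(k + l - l₀)(0, l₀) = some (k, l)`; that is, `(k, l)` lies in the connected component
whose highest weight satisfies `2J = a + b - 2·min l (a - k)`. -/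
theorem crystal_WE_selection_rule (a b k l : ℕ) (hk : k ≤ a) (hl : l ≤ b) :
    iterOpt (ftil a b) (k + l - min l (a - k)) (0, min l (a - k)) = some (k, l) := by
  rcases le_or_gt l (a - k) with h | h
  · rw [min_eq_left h, show k + l - l = k by omega]
    exact step1 a b l k hk h
  · rw [min_eq_right h.le, show k + l - (a - k) = k + (l - (a - k)) by omega]
    rw [iterOpt_add (ftil a b) k (l - (a - k)) _ (k, a - k) (step1 a b (a - k) k hk le_rfl)]
    rw [step2 a b k (l - (a - k)) (a - k) le_rfl (by omega)]
    congr 2; omega
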